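/- Let u, v be unit vectors with u ≠ v and u ≠ −v. Then w := u/‖u‖ − v = u − v is nonzero, and if a point p minimizes x ↦ ‖x − a‖ + ‖b − x‖ over a hyperplane H through p with (p − a)/‖p − a‖ = u and (b − p)/‖b − p‖ = v, then the angle between the incoming direction u and H equals the angle between the outgoing direction v and H (equivalently, v = u − 2⟨u, ν⟩ν where ν is the unit normal to H). -/

import Mathlib

open scoped RealInnerProductSpace

lemma stmt19_normDeriv {d : ℕ} (y h : EuclideanSpace ℝ (Fin d)) (hy : y ≠ 0) :
    HasDerivAt (fun t : ℝ => ‖y + t • h‖) (‖y‖⁻¹ * ⟪y, h⟫) 0 := by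
  have hg : HasDerivAt (fun t : ℝ => y + t • h) h 0 := by
    simpa using ((hasDerivAt_id (0 : ℝ)).smul_const h).const_add y
  have hsq := hg.norm_sq
  simp only [zero_smul, add_zero] at hsq
  have hne : ‖y + (0:ℝ) • h‖ ^ 2 ≠ 0 := by
    simpa using pow_ne_zero 2 (norm_ne_zero_iff.mpr hy)
  have hs := hsq.sqrt hne
  have hfun : (fun t : ℝ => Real.sqrt (‖y + t • h‖ ^ 2)) = fun t : ℝ => ‖y + t • h‖ := by
    funext t; exact Real.sqrt_sq (norm_nonneg _)
  rw [hfun] at hs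
  convert hs using 1
  have : Real.sqrt (‖y + (0:ℝ) • h‖ ^ 2) = ‖y‖ := by
    simp [Real.sqrt_sq (norm_nonneg _)]
  rw [this]
  have hn : ‖y‖ ≠ 0 := norm_ne_zero_iff.mpr hy
  field_simp

/-- Law of reflection from the least action principle: with incoming unit direction
`u = (p−a)/‖p−a‖` and outgoing unit direction `v = (b−p)/‖b−p‖`, `u ≠ v`, `u ≠ −v`,
if `p` minimizes `x ↦ ‖x − a‖ + ‖b − x‖` over the hyperplane through `p` with unit normal
`ν`, then `u − v ≠ 0` and `v = u − 2⟨u,ν⟩ν` (angle of incidence equals angle of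
reflection). -/
theorem stmt19 {d : ℕ} (a b p u v ν : EuclideanSpace ℝ (Fin d))
    (hap : p ≠ a) (hpb : b ≠ p)
    (hu : u = ‖p - a‖⁻¹ • (p - a)) (hv : v = ‖b - p‖⁻¹ • (b - p))
    (huunit : ‖u‖ = 1) (hvunit : ‖v‖ = 1)
    (huv : u ≠ v) (huv' : u ≠ -v)
    (hνunit : ‖ν‖ = 1)
    (hmin : ∀ x : EuclideanSpace ℝ (Fin d), ⟪ν, x - p⟫ = 0 →
      ‖p - a‖ + ‖b - p‖ ≤ ‖x - a‖ + ‖b - x‖) :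
    u - v ≠ 0 ∧ v = u - (2 * ⟪u, ν⟫) • ν := by
  have huvne : u - v ≠ 0 := sub_ne_zero.mpr huv
  -- key: first-order condition
  have key : ∀ h : EuclideanSpace ℝ (Fin d), ⟪ν, h⟫ = 0 → ⟪u - v, h⟫ = 0 := by
    intro h hh
    have h1 := stmt19_normDeriv (p - a) h (sub_ne_zero.mpr hap)
    have h2 := stmt19_normDeriv (b - p) (-h) (sub_ne_zero.mpr hpb)
    have hF := h1.add h2
    have hloc : IsLocalMin
        (fun t : ℝ => ‖p - a + t • h‖ + ‖b - p + t • (-h)‖) 0 := by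
      apply Filter.Eventually.of_forall
      intro t
      have hx : ⟪ν, (p + t • h) - p⟫ = 0 := by
        simp [inner_smul_right, hh]
      have := hmin (p + t • h) hx
      have e1 : (p + t • h) - a = p - a + t • h := by abel
      have e2 : b - (p + t • h) = b - p + t • (-h) := by
        rw [smul_neg]; abel
      simpa [e1, e2] using this
    have hzero := hloc.hasDerivAt_eq_zero hF
    have hinu : ⟪u, h⟫ = ‖p - a‖⁻¹ * ⟪p - a, h⟫ := by
      rw [hu, real_inner_smul_left]
    have hinv : ⟪v, h⟫ = ‖b - p‖⁻¹ * ⟪b - p, h⟫ := by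
      rw [hv, real_inner_smul_left]
    rw [inner_sub_left, hinu, hinv]
    have hneg : ⟪b - p, -h⟫ = -⟪b - p, h⟫ := by
      rw [inner_neg_right]
    rw [hneg] at hzero
    linarith [hzero]
  set c : ℝ := ⟪ν, u - v⟫ with hc
  have hνν : ⟪ν, ν⟫ = 1 := by
    rw [real_inner_self_eq_norm_sq, hνunit]; norm_num
  have hh0 : ⟪ν, (u - v) - c • ν⟫ = 0 := by
    rw [inner_sub_right, real_inner_smul_right, hνν]; simp [hc]
  have hk := key _ hh0
  rw [inner_sub_right, real_inner_smul_right] at hk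
  have hcomm : ⟪u - v, ν⟫ = c := real_inner_comm ν (u - v) ▸ rfl
  have hself : ⟪u - v, u - v⟫ = c * c := by rw [hcomm] at hk; linarith
  have heq : u - v = c • ν := by
    have hnz : ‖(u - v) - c • ν‖ ^ 2 = 0 := by
      rw [← real_inner_self_eq_norm_sq, inner_sub_sub_self]
      rw [real_inner_smul_right, real_inner_smul_left, real_inner_smul_left,
        real_inner_smul_right, hνν, hcomm]
      simp only [hc] at *
      nlinarith [hself]
    have := (pow_eq_zero_iff (two_ne_zero)).mp hnz
    have := norm_eq_zero.mp this
    exact sub_eq_zero.mp this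
  have hcne : c ≠ 0 := by
    intro h0
    exact huvne (by rw [heq, h0, zero_smul])
  have huu : ⟪u, u⟫ = 1 := by
    rw [real_inner_self_eq_norm_sq, huunit]; norm_num
  have hvv : ⟪v, v⟫ = 1 := by
    rw [real_inner_self_eq_norm_sq, hvunit]; norm_num
  have hsum : ⟪u - v, u + v⟫ = 0 := by
    rw [inner_add_right, inner_sub_left, inner_sub_left]
    have := real_inner_comm u v
    linarith
  have hsum' : c * ⟪ν, u + v⟫ = 0 := by
    rw [← real_inner_smul_left, ← heq]; exact hsum
  have hνuv : ⟪ν, u + v⟫ = 0 := by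
    rcases mul_eq_zero.mp hsum' with h | h
    · exact absurd h hcne
    · exact h
  rw [inner_add_right] at hνuv
  have hcval : c = 2 * ⟪u, ν⟫ := by
    have := real_inner_comm u ν
    simp only [hc, inner_sub_right]
    linarith
  refine ⟨huvne, ?_⟩
  rw [← hcval]
  have : v = u - (u - v) := by abel
  rw [this, heq]
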